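/- For every real number p > 2 and every real τ > 1 there exists a constant θ = θ(p, τ) > 0 such that for every integer d ≥ 2 and all positive real numbers a₁, …, a_d the following holds: if a_{i₀} ≥ τ · a_{j₀} for some indices i₀ ≠ j₀, then ∑_{i=1}^{d} a_i² ≤ d^{1−2/p} · (1 − θ/d) · (∑_{i=1}^{d} a_i^p)^{2/p}. -/

import Mathlib

open Finset Real


theorem lemA {p : ℝ} (hp : 2 < p) {ι : Type*} (s : Finset ι) (f : ι → ℝ)
    (hf : ∀ i, 0 ≤ f i) :
    ∑ i ∈ s, f i ^ 2 ≤ (s.card : ℝ) ^ (1 - 2 / p) * (∑ i ∈ s, f i ^ p) ^ (2 / p) := by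
  have hp0 : 0 < p := by linarith
  have hpq : Real.HolderConjugate (p / (p - 2)) (p / 2) := by
    rw [Real.holderConjugate_iff]; constructor
    · rw [lt_div_iff₀ (by linarith)]; linarith
    · field_simp; ring
  have h := Real.inner_le_Lp_mul_Lq_of_nonneg (f := fun _ : ι => (1:ℝ))
    (g := fun i => f i ^ 2) s hpq
    (fun i _ => zero_le_one) (fun i _ => sq_nonneg _)
  simp only [one_mul] at h
  calc ∑ i ∈ s, f i ^ 2 ≤ (∑ i ∈ s, (1:ℝ) ^ (p/(p-2))) ^ (1/(p/(p-2))) *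
        (∑ i ∈ s, (f i ^ 2) ^ (p/2)) ^ (1/(p/2)) := h
    _ = (s.card : ℝ) ^ (1 - 2 / p) * (∑ i ∈ s, f i ^ p) ^ (2 / p) := by
        have e2 : (1:ℝ)/(p/(p-2)) = 1 - 2/p := by
          rw [one_div_div]; field_simp
        have e3 : (1:ℝ)/(p/2) = 2/p := one_div_div _ _
        rw [e2, e3]
        congr 2
        · simp [Real.one_rpow]
        · apply Finset.sum_congr rfl
          intro i _
          rw [← Real.rpow_natCast (f i) 2, ← Real.rpow_mul (hf i)]
          norm_num
          rw [show 2 * (p/2) = p by ring]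


theorem lemC {p : ℝ} (hp : 2 < p) {m₁ m₂ U V : ℝ} (hm₁ : 0 ≤ m₁) (hm₂ : 0 ≤ m₂)
    (hU : 0 ≤ U) (hV : 0 ≤ V) :
    m₁ ^ (1 - 2/p) * U ^ (2/p) + m₂ ^ (1 - 2/p) * V ^ (2/p) ≤
      (m₁ + m₂) ^ (1 - 2/p) * (U + V) ^ (2/p) := by
  have hp0 : 0 < p := by linarith
  have hpq : Real.HolderConjugate (p / (p - 2)) (p / 2) := by
    rw [Real.holderConjugate_iff]; constructor
    · rw [lt_div_iff₀ (by linarith)]; linarith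
    · field_simp; ring
  have h := Real.inner_le_Lp_mul_Lq_of_nonneg
    (f := ![m₁ ^ (1 - 2/p), m₂ ^ (1 - 2/p)]) (g := ![U ^ (2/p), V ^ (2/p)])
    (Finset.univ : Finset (Fin 2)) hpq
    (fun i _ => by fin_cases i <;> simp <;> positivity)
    (fun i _ => by fin_cases i <;> simp <;> positivity)
  rw [Fin.sum_univ_two, Fin.sum_univ_two, Fin.sum_univ_two] at h
  simp only [Matrix.cons_val_zero, Matrix.cons_val_one, Matrix.head_cons] at h
  have key : ∀ x : ℝ, 0 ≤ x → (x ^ (1 - 2/p)) ^ (p/(p-2)) = x := by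
    intro x hx
    rw [← Real.rpow_mul hx]
    rw [show (1 - 2/p) * (p/(p-2)) = 1 by
      have h2 : p - 2 ≠ 0 := by linarith
      field_simp, Real.rpow_one]
  have key2 : ∀ x : ℝ, 0 ≤ x → (x ^ ((2:ℝ)/p)) ^ (p/2) = x := by
    intro x hx
    rw [← Real.rpow_mul hx, show (2/p) * (p/2) = 1 by field_simp, Real.rpow_one]
  rw [key _ hm₁, key _ hm₂, key2 _ hU, key2 _ hV] at h
  have e2 : (1:ℝ)/(p/(p-2)) = 1 - 2/p := by rw [one_div_div]; field_simp
  have e3 : (1:ℝ)/(p/2) = 2/p := one_div_div _ _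
  rwa [e2, e3] at h


theorem lemB1 {p : ℝ} (hp : 2 < p) {x : ℝ} (hx : 1 < x) :
    x ^ 2 + 1 < 2 ^ (1 - 2/p) * (x ^ p + 1) ^ (2/p) := by
  have hp0 : 0 < p := by linarith
  have hx0 : 0 < x := by linarith
  have hcv := strictConvexOn_rpow (p := p/2) (by rw [lt_div_iff₀] <;> linarith)
  have hne : x ^ 2 ≠ (1:ℝ) := by nlinarith
  have h := hcv.2 (Set.mem_Ici.mpr (by positivity : (0:ℝ) ≤ x ^ 2))
    (Set.mem_Ici.mpr zero_le_one) hne (by norm_num : (0:ℝ) < 1/2)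
    (by norm_num : (0:ℝ) < 1/2) (by norm_num)
  simp only [smul_eq_mul] at h
  -- h : (1/2 * x^2 + 1/2 * 1) ^ (p/2) < 1/2 * (x^2)^(p/2) + 1/2 * 1^(p/2)
  have e1 : ((x:ℝ) ^ 2) ^ (p/2) = x ^ p := by
    rw [← Real.rpow_natCast x 2, ← Real.rpow_mul hx0.le]
    norm_num
    rw [show 2 * (p/2) = p by ring]
  rw [e1, Real.one_rpow] at h
  -- so ((x^2+1)/2)^(p/2) < (x^p+1)/2
  have h2 : ((x ^ 2 + 1)/2) ^ (p/2) < (x ^ p + 1)/2 := by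
    calc ((x ^ 2 + 1)/2) ^ (p/2) = (1/2 * x^2 + 1/2 * 1) ^ (p/2) := by ring_nf
      _ < 1/2 * x ^ p + 1/2 * 1 := h
      _ = (x ^ p + 1)/2 := by ring
  -- apply strict mono of rpow (2/p)
  have h3 : (((x ^ 2 + 1)/2) ^ (p/2)) ^ (2/p) < ((x ^ p + 1)/2) ^ (2/p) :=
    Real.rpow_lt_rpow (by positivity) h2 (by positivity)
  rw [← Real.rpow_mul (by positivity), show (p/2) * (2/p) = 1 by field_simp,
    Real.rpow_one] at h3
  have e4 : (2:ℝ) * ((x ^ p + 1)/2) ^ (2/p) = 2 ^ (1 - 2/p) * (x ^ p + 1) ^ (2/p) := by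
    rw [Real.div_rpow (by positivity) (by norm_num : (0:ℝ) ≤ 2),
      Real.rpow_sub (by norm_num : (0:ℝ) < 2), Real.rpow_one]
    ring
  linarith

theorem lemB2 {p τ : ℝ} (hp : 2 < p) (hτ : 1 < τ) :
    ∃ K : ℝ, 0 < K ∧ K < 2 ^ (1 - 2/p) ∧
      ∀ x : ℝ, τ ≤ x → x ^ 2 + 1 ≤ K * (x ^ p + 1) ^ (2/p) := by
  have hp0 : 0 < p := by linarith
  have hβ : 0 < 1 - 2/p := by
    have : 2/p < 1 := by rw [div_lt_one hp0]; linarith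
    linarith
  have h2 : 1 < (2:ℝ) ^ (1 - 2/p) :=
    Real.one_lt_rpow_iff_of_pos (by norm_num) |>.mpr (Or.inl ⟨one_lt_two, hβ⟩)
  set T : ℝ := 2 ^ (1 - (2:ℝ)/p) - 1 with hT_def
  have hT : 0 < T := by simp only [hT_def]; linarith
  set X : ℝ := max τ (Real.sqrt (2/T)) with hX_def
  have hτX : τ ≤ X := le_max_left _ _
  set g : ℝ → ℝ := fun x => (x ^ 2 + 1) / ((x ^ p + 1) ^ (2/p)) with hg_def
  have hDpos : ∀ x : ℝ, 0 < x → 0 < (x ^ p + 1) ^ (2/p) := by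
    intro x hx
    have := Real.rpow_pos_of_pos hx p
    positivity
  have hrpow_cont : ∀ q : ℝ, 0 ≤ q → Continuous (fun x : ℝ => x ^ q) := fun q hq =>
    continuous_iff_continuousAt.mpr fun x => Real.continuousAt_rpow_const x q (Or.inr hq)
  have hcont : ContinuousOn g (Set.Icc τ X) := by
    apply ContinuousOn.div
    · exact (Continuous.continuousOn (by continuity))
    · exact (((hrpow_cont p hp0.le).add continuous_const).comp continuous_id
        |>.rpow_const (fun x => Or.inr (by positivity))).continuousOn
    · intro x hx
      exact (hDpos x (by linarith [hx.1] : (0:ℝ) < x)).ne'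
  obtain ⟨xs, hxs_mem, hxs_max⟩ :=
    isCompact_Icc.exists_isMaxOn (Set.nonempty_Icc.mpr hτX) hcont
  set K : ℝ := max (g xs) (1 + T/2) with hK_def
  have hKpos : 0 < K := lt_of_lt_of_le (by linarith) (le_max_right _ _)
  have hxs1 : 1 < xs := lt_of_lt_of_le hτ hxs_mem.1
  have hgxs : g xs < 2 ^ (1 - 2/p) := by
    rw [hg_def]
    rw [div_lt_iff₀ (hDpos xs (by linarith))]
    calc xs ^ 2 + 1 < 2 ^ (1 - 2/p) * (xs ^ p + 1) ^ (2/p) := lemB1 hp hxs1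
      _ = _ := rfl
  have hK_lt : K < 2 ^ (1 - 2/p) := by
    apply max_lt hgxs
    simp only [hT_def]; linarith
  refine ⟨K, hKpos, hK_lt, fun x hx => ?_⟩
  have hx0 : 0 < x := by linarith
  have hgK : g x ≤ K := by
    rcases le_or_gt x X with hle | hgt
    · exact le_trans (hxs_max (Set.mem_Icc.mpr ⟨hx, hle⟩)) (le_max_left _ _)
    · -- tail bound
      have hxsqrt : Real.sqrt (2/T) ≤ x := le_trans (le_max_right τ _) hgt.le
      have hx2 : (0:ℝ) < x ^ 2 := by positivity
      have h2T : 2/T ≤ x ^ 2 := by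
        calc 2/T = Real.sqrt (2/T) ^ 2 := (Real.sq_sqrt (by positivity)).symm
          _ ≤ x ^ 2 := by
              apply pow_le_pow_left₀ (Real.sqrt_nonneg _) hxsqrt
      have hinv : 1/x^2 ≤ T/2 := by
        rw [div_le_div_iff₀ hx2 (by norm_num)]
        rw [div_le_iff₀ hT] at h2T
        linarith
      have hD_ge : x ^ 2 ≤ (x ^ p + 1) ^ (2/p) := by
        calc x ^ 2 = (x ^ p) ^ (2/p) := by
              rw [← Real.rpow_natCast x 2, ← Real.rpow_mul hx0.le,
                show p * (2/p) = 2 by field_simp]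
              norm_num
          _ ≤ (x ^ p + 1) ^ (2/p) := by
              apply Real.rpow_le_rpow (by positivity) (by linarith) (by positivity)
      calc g x ≤ (x ^ 2 + 1) / x ^ 2 := by
            apply div_le_div_of_nonneg_left (by positivity) hx2 hD_ge
        _ = 1 + 1/x^2 := by field_simp
        _ ≤ 1 + T/2 := by linarith
        _ ≤ K := le_max_right _ _
  have := mul_le_mul_of_nonneg_right hgK (le_of_lt (hDpos x hx0))
  calc x ^ 2 + 1 = g x * (x ^ p + 1) ^ (2/p) := by
        rw [hg_def]; field_simp
    _ ≤ K * (x ^ p + 1) ^ (2/p) := this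

theorem lemB {p τ : ℝ} (hp : 2 < p) (hτ : 1 < τ) :
    ∃ c : ℝ, 0 < c ∧ c < 1 ∧
      ∀ x y : ℝ, 0 < x → 0 < y → τ * y ≤ x →
        x ^ 2 + y ^ 2 ≤ c * 2 ^ (1 - 2/p) * (x ^ p + y ^ p) ^ (2/p) := by
  obtain ⟨K, hK0, hK_lt, hK⟩ := lemB2 hp hτ
  have h2pos : (0:ℝ) < 2 ^ (1 - 2/p) := Real.rpow_pos_of_pos (by norm_num) _
  refine ⟨K / 2 ^ (1 - 2/p), by positivity, (div_lt_one h2pos).mpr hK_lt, ?_⟩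
  intro x y hx hy hxy
  rw [div_mul_cancel₀ _ h2pos.ne']
  set t : ℝ := x / y with ht_def
  have ht : τ ≤ t := (le_div_iff₀ hy).mpr hxy
  have ht0 : 0 < t := by positivity
  have hb := hK t ht
  have hyt : y * t = x := by rw [ht_def]; field_simp
  have key : y ^ 2 * (t ^ p + 1) ^ (2/p) = (x ^ p + y ^ p) ^ (2/p) := by
    have e1 : y ^ 2 = (y ^ p) ^ ((2:ℝ)/p) := by
      rw [← Real.rpow_natCast y 2, ← Real.rpow_mul hy.le,
        show p * (2/p) = 2 by field_simp]
      norm_num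
    rw [e1, ← Real.mul_rpow (by positivity) (by positivity)]
    congr 1
    rw [mul_add, mul_one, ← Real.mul_rpow hy.le ht0.le, hyt, add_comm]
  calc x ^ 2 + y ^ 2 = y ^ 2 * (t ^ 2 + 1) := by
        rw [← hyt]; ring
    _ ≤ y ^ 2 * (K * (t ^ p + 1) ^ (2/p)) := by
        apply mul_le_mul_of_nonneg_left hb (by positivity)
    _ = K * (y ^ 2 * (t ^ p + 1) ^ (2/p)) := by ring
    _ = K * (x ^ p + y ^ p) ^ (2/p) := by rw [key]

theorem stmt5 (p τ : ℝ) (hp : 2 < p) (hτ : 1 < τ) :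
    ∃ θ : ℝ, 0 < θ ∧
      ∀ (d : ℕ), 2 ≤ d → ∀ a : Fin d → ℝ, (∀ i, 0 < a i) →
        (∃ i₀ j₀ : Fin d, i₀ ≠ j₀ ∧ τ * a j₀ ≤ a i₀) →
        ∑ i, a i ^ 2 ≤
          (d : ℝ) ^ (1 - 2 / p) * (1 - θ / d) * (∑ i, a i ^ p) ^ (2 / p) := by
  have hp0 : 0 < p := by linarith
  have hp2 : p - 2 ≠ 0 := by linarith
  have hβ0 : 0 < 1 - 2/p := by
    have : 2/p < 1 := by rw [div_lt_one hp0]; linarith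
    linarith
  have hβ1 : 1 - 2/p ≤ 1 := by
    have : 0 < 2/p := by positivity
    linarith
  obtain ⟨c, hc0, hc1, hc⟩ := lemB hp hτ
  set r : ℝ := p / (p - 2) with hr_def
  have hr0 : 0 < r := by
    apply div_pos hp0; linarith
  have hcr0 : 0 < c ^ r := Real.rpow_pos_of_pos hc0 r
  have hcr1 : c ^ r < 1 := Real.rpow_lt_one hc0.le hc1 hr0
  set δ : ℝ := 2 * (1 - c ^ r) with hδ_def
  have hδ0 : 0 < δ := by simp only [hδ_def]; linarith
  have hδ2 : δ ≤ 2 := by simp only [hδ_def]; linarith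
  refine ⟨(1 - 2/p) * δ, by positivity, ?_⟩
  intro d hd a ha ⟨i₀, j₀, hne, hij⟩
  have hd2 : (2:ℝ) ≤ (d:ℝ) := by exact_mod_cast hd
  have hd0 : (0:ℝ) < d := by linarith
  set s : Finset (Fin d) := (Finset.univ.erase i₀).erase j₀ with hs_def
  have hj : j₀ ∈ Finset.univ.erase i₀ := Finset.mem_erase.mpr ⟨hne.symm, Finset.mem_univ _⟩
  have split2 : ∀ f : Fin d → ℝ, ∑ i, f i = (f i₀ + f j₀) + ∑ i ∈ s, f i := by
    intro f
    rw [← Finset.add_sum_erase _ f (Finset.mem_univ i₀), ← Finset.add_sum_erase _ f hj,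
      add_assoc]
  have hcard : (s.card : ℝ) = (d:ℝ) - 2 := by
    rw [hs_def, Finset.card_erase_of_mem hj,
      Finset.card_erase_of_mem (Finset.mem_univ i₀), Finset.card_univ, Fintype.card_fin]
    have : d - 1 - 1 = d - 2 := by omega
    rw [this, Nat.cast_sub hd]
    norm_num
  set U : ℝ := a i₀ ^ p + a j₀ ^ p with hU_def
  set V : ℝ := ∑ i ∈ s, a i ^ p with hV_def
  have hU0 : 0 ≤ U := by
    have := Real.rpow_pos_of_pos (ha i₀) p
    have := Real.rpow_pos_of_pos (ha j₀) p
    simp only [hU_def]; linarith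
  have hV0 : 0 ≤ V :=
    Finset.sum_nonneg fun i _ => (Real.rpow_pos_of_pos (ha i) p).le
  -- step 1
  have step1 : a i₀ ^ 2 + a j₀ ^ 2 ≤ (2 * c ^ r) ^ (1 - 2/p) * U ^ (2/p) := by
    have e : (2 * c ^ r) ^ (1 - 2/p) = c * 2 ^ (1 - 2/p) := by
      rw [Real.mul_rpow (by norm_num) hcr0.le, ← Real.rpow_mul hc0.le,
        show r * (1 - 2/p) = 1 by rw [hr_def]; field_simp, Real.rpow_one]
      ring
    rw [e]
    exact hc _ _ (ha i₀) (ha j₀) hij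
  -- step 2
  have step2 : ∑ i ∈ s, a i ^ 2 ≤ ((d:ℝ) - 2) ^ (1 - 2/p) * V ^ (2/p) := by
    have := lemA hp s a (fun i => (ha i).le)
    rwa [hcard] at this
  -- step 3 : combine
  have step3 : (2 * c ^ r) ^ (1 - 2/p) * U ^ (2/p) + ((d:ℝ) - 2) ^ (1 - 2/p) * V ^ (2/p)
      ≤ ((d:ℝ) - δ) ^ (1 - 2/p) * (U + V) ^ (2/p) := by
    have h := lemC hp (by positivity : (0:ℝ) ≤ 2 * c ^ r) (by linarith : (0:ℝ) ≤ (d:ℝ) - 2)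
      hU0 hV0
    have e : 2 * c ^ r + ((d:ℝ) - 2) = (d:ℝ) - δ := by rw [hδ_def]; ring
    rwa [e] at h
  -- step 4 : Bernoulli
  have step4 : ((d:ℝ) - δ) ^ (1 - 2/p) ≤ (d:ℝ) ^ (1 - 2/p) * (1 - (1 - 2/p) * δ / d) := by
    have hs1 : -1 ≤ -(δ/d) := by
      rw [neg_le_neg_iff]
      rw [div_le_one hd0]
      linarith
    have e : (d:ℝ) - δ = (d:ℝ) * (1 + -(δ/d)) := by
      rw [mul_add, mul_one, mul_neg, mul_div_cancel₀ _ hd0.ne']; ring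
    rw [e, Real.mul_rpow hd0.le (by linarith : (0:ℝ) ≤ 1 + -(δ/d))]
    apply mul_le_mul_of_nonneg_left _ (Real.rpow_nonneg hd0.le _)
    calc (1 + -(δ/d)) ^ (1 - 2/p) ≤ 1 + (1 - 2/p) * -(δ/d) :=
          rpow_one_add_le_one_add_mul_self hs1 hβ0.le hβ1
      _ = 1 - (1 - 2/p) * δ / d := by ring
  -- assemble
  rw [split2 (fun i => a i ^ 2), split2 (fun i => a i ^ p)]
  calc (a i₀ ^ 2 + a j₀ ^ 2) + ∑ i ∈ s, a i ^ 2
      ≤ (2 * c ^ r) ^ (1 - 2/p) * U ^ (2/p) + ((d:ℝ) - 2) ^ (1 - 2/p) * V ^ (2/p) :=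
        add_le_add step1 step2
    _ ≤ ((d:ℝ) - δ) ^ (1 - 2/p) * (U + V) ^ (2/p) := step3
    _ ≤ (d:ℝ) ^ (1 - 2/p) * (1 - (1 - 2/p) * δ / d) * (U + V) ^ (2/p) := by
        apply mul_le_mul_of_nonneg_right step4 (Real.rpow_nonneg (by linarith) _)
    _ = (d:ℝ) ^ (1 - 2/p) * (1 - (1 - 2/p) * δ / d) * ((a i₀ ^ p + a j₀ ^ p) + V) ^ (2/p) := rfl
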